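/- Let R be a G-graded unital ring that is strongly graded, i.e. R_g R_h = R_{gh} for all g, h ∈ G. Then for any G-graded unital ring B, the tensor product grading on B ⊗ R (over the base ring) makes B ⊗ R strongly graded. -/

import Mathlib

open TensorProduct

/-- The tensor product grading: `(B ⊗ R)_d = ⊕_{g+h=d} B_g ⊗ R_h`. -/
noncomputable def tensorGrading {ℓ B R G : Type*} [CommRing ℓ] [Ring B] [Ring R]
    [Algebra ℓ B] [Algebra ℓ R] [AddCommGroup G]
    (ℬ : G → Submodule ℓ B) (ℛ : G → Submodule ℓ R) (d : G) :
    Submodule ℓ (B ⊗[ℓ] R) :=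
  ⨆ q : {q : G × G // q.1 + q.2 = d},
    LinearMap.range (TensorProduct.map (ℬ q.1.1).subtype (ℛ q.1.2).subtype)

lemma tmul_mem_tensorGrading {ℓ B R G : Type*} [CommRing ℓ] [Ring B] [Ring R]
    [Algebra ℓ B] [Algebra ℓ R] [AddCommGroup G]
    (ℬ : G → Submodule ℓ B) (ℛ : G → Submodule ℓ R) {g h d : G} (hd : g + h = d)
    {b : B} {r : R} (hb : b ∈ ℬ g) (hr : r ∈ ℛ h) :
    b ⊗ₜ[ℓ] r ∈ tensorGrading ℬ ℛ d := by
  refine le_iSup (fun q : {q : G × G // q.1 + q.2 = d} =>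
    LinearMap.range (TensorProduct.map (ℬ q.1.1).subtype (ℛ q.1.2).subtype))
    ⟨(g, h), hd⟩ ?_
  exact ⟨(⟨b, hb⟩ : ℬ g) ⊗ₜ[ℓ] (⟨r, hr⟩ : ℛ h), rfl⟩

lemma tensorGrading_eq_span {ℓ B R G : Type*} [CommRing ℓ] [Ring B] [Ring R]
    [Algebra ℓ B] [Algebra ℓ R] [AddCommGroup G]
    (ℬ : G → Submodule ℓ B) (ℛ : G → Submodule ℓ R) (d : G) :
    tensorGrading ℬ ℛ d = Submodule.span ℓ
      {x : B ⊗[ℓ] R | ∃ g h, g + h = d ∧ ∃ b ∈ ℬ g, ∃ r ∈ ℛ h, x = b ⊗ₜ[ℓ] r} := by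
  apply le_antisymm
  · apply iSup_le
    rintro ⟨⟨g, h⟩, hd⟩
    rw [TensorProduct.range_map_eq_span_tmul]
    apply Submodule.span_mono
    rintro _ ⟨⟨b, hb⟩, ⟨r, hr⟩, rfl⟩
    exact ⟨g, h, hd, b, hb, r, hr, rfl⟩
  · rw [Submodule.span_le]
    rintro _ ⟨g, h, hd, b, hb, r, hr, rfl⟩
    exact tmul_mem_tensorGrading ℬ ℛ hd hb hr

/-- If `R` is strongly graded, then for any graded algebra `B` the tensor product
grading makes `B ⊗ R` strongly graded. -/
theorem stmt_3 {ℓ B R G : Type*} [CommRing ℓ] [Ring B] [Ring R]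
    [Algebra ℓ B] [Algebra ℓ R] [AddCommGroup G] [DecidableEq G]
    (ℬ : G → Submodule ℓ B) (ℛ : G → Submodule ℓ R)
    [GradedAlgebra ℬ] [GradedAlgebra ℛ]
    (hR : ∀ g h : G, ℛ g * ℛ h = ℛ (g + h)) :
    ∀ g h : G,
      tensorGrading ℬ ℛ g * tensorGrading ℬ ℛ h = tensorGrading ℬ ℛ (g + h) := by
  intro g h
  apply le_antisymm
  · rw [tensorGrading_eq_span ℬ ℛ g, tensorGrading_eq_span ℬ ℛ h,
      Submodule.span_mul_span, Submodule.span_le]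
    rintro _ ⟨_, ⟨a, c, hac, b, hb, r, hr, rfl⟩, _, ⟨a', c', hac', b', hb', r', hr', rfl⟩, rfl⟩
    show (b ⊗ₜ[ℓ] r) * (b' ⊗ₜ[ℓ] r') ∈ _
    rw [Algebra.TensorProduct.tmul_mul_tmul]
    exact tmul_mem_tensorGrading ℬ ℛ (by rw [← hac, ← hac']; abel)
      (SetLike.mul_mem_graded hb hb') (SetLike.mul_mem_graded hr hr')
  · rw [tensorGrading_eq_span ℬ ℛ (g + h), Submodule.span_le]
    rintro _ ⟨a, c, hac, b, hb, r, hr, rfl⟩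
    have hc : g - a + h = c := by
      rw [sub_add_eq_add_sub, ← hac, add_sub_cancel_left]
    have hr' : r ∈ ℛ (g - a) * ℛ h := by rw [hR, hc]; exact hr
    refine Submodule.mul_induction_on hr' (fun r₁ h₁ r₂ h₂ => ?_)
      (fun x y hx hy => by rw [TensorProduct.tmul_add]; exact add_mem hx hy)
    have : b ⊗ₜ[ℓ] (r₁ * r₂) = (b ⊗ₜ[ℓ] r₁) * ((1 : B) ⊗ₜ[ℓ] r₂) := by
      rw [Algebra.TensorProduct.tmul_mul_tmul, mul_one]
    rw [this]
    exact Submodule.mul_mem_mul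
      (tmul_mem_tensorGrading ℬ ℛ (by abel : a + (g - a) = g) hb h₁)
      (tmul_mem_tensorGrading ℬ ℛ (zero_add h) (SetLike.one_mem_graded ℬ) h₂)
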